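/- In every nonempty zip tree, the rank of the root equals the maximum of the ranks of all nodes. Consequently, for any nonempty list of (rank, key) pairs with pairwise distinct keys, the rank of the root of the zip tree obtained by sequentially inserting all pairs into the empty tree equals the maximum of the ranks in the list. -/

import Mathlib

/-- Ranked binary trees: each node stores a natural-number rank and a key. -/
inductive ZTree (α : Type*) where
  | empty : ZTree α
  | node (rank : ℕ) (key : α) (left right : ZTree α) : ZTree α

namespace ZTree

/-- The rank of the root of a tree, with `rk empty = -1`. -/
def rk {α : Type*} : ZTree α → ℤ
  | .empty => -1
  | .node r _ _ _ => (r : ℤ)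

/-- The set of keys occurring in a tree. -/
def keys {α : Type*} : ZTree α → Set α
  | .empty => ∅
  | .node _ k l r => {k} ∪ l.keys ∪ r.keys

/-- The left child of a tree (the empty tree for the empty tree). -/
def left {α : Type*} : ZTree α → ZTree α
  | .empty => .empty
  | .node _ _ l _ => l

/-- The right child of a tree (the empty tree for the empty tree). -/
def right {α : Type*} : ZTree α → ZTree α
  | .empty => .empty
  | .node _ _ _ r => r

/-- The number of nodes of a tree. -/
def size {α : Type*} : ZTree α → ℕ
  | .empty => 0
  | .node _ _ l r => l.size + r.size + 1

/-- The zip tree invariant: binary-search-tree property on keys, the rank of a left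
child is strictly smaller than the rank of its parent, and the rank of a right child
is at most the rank of its parent. -/
def IsZipTree {α : Type*} [LinearOrder α] : ZTree α → Prop
  | .empty => True
  | .node rank k l r =>
      (∀ x ∈ l.keys, x < k) ∧ (∀ x ∈ r.keys, k < x) ∧
      l.rk < (rank : ℤ) ∧ r.rk ≤ (rank : ℤ) ∧ l.IsZipTree ∧ r.IsZipTree

/-- Zip-tree insertion. -/
def insert {α : Type*} [LinearOrder α] (r : ℕ) (k : α) : ZTree α → ZTree α
  | .empty => .node r k .empty .empty
  | .node rank key l rt =>
    if k = key then .node rank key l rt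
    else if k < key then
      match ZTree.insert r k l with
      | .empty => .node rank key .empty rt
      | .node tr tk tl trr =>
          if (tr : ℤ) < (rank : ℤ) then .node rank key (.node tr tk tl trr) rt
          else .node tr tk tl (.node rank key trr rt)
    else
      match ZTree.insert r k rt with
      | .empty => .node rank key l .empty
      | .node tr tk tl trr =>
          if (tr : ℤ) ≤ (rank : ℤ) then .node rank key l (.node tr tk tl trr)
          else .node tr tk (.node rank key l tl) trr

/-- Zipping two trees. -/
def zip {α : Type*} (k : α) : ZTree α → ZTree α → ZTree α
  | .empty, .empty => .empty
  | .empty, t => t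
  | t, .empty => t
  | .node r1 k1 l1 rt1, .node r2 k2 l2 rt2 =>
    if r1 < r2 then
      .node r2 k2 (ZTree.zip k (.node r1 k1 l1 rt1) l2) rt2
    else
      .node r1 k1 l1 (ZTree.zip k rt1 (.node r2 k2 l2 rt2))
  termination_by t1 t2 => t1.size + t2.size
  decreasing_by
    · simp [ZTree.size] <;> omega
    · simp [ZTree.size] <;> omega

/-- Zip-tree deletion. -/
def delete {α : Type*} [LinearOrder α] (k : α) : ZTree α → ZTree α
  | .empty => .empty
  | .node rank key l r =>
    if k < key then .node rank key (ZTree.delete k l) r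
    else if key < k then .node rank key l (ZTree.delete k r)
    else ZTree.zip k l r

end ZTree

/-- The multiset of ranks of all nodes of a tree. -/
def ZTree.ranks {α : Type*} : ZTree α → Multiset ℕ
  | .empty => 0
  | .node r _ l rt => r ::ₘ (l.ranks + rt.ranks)

/-- Sequentially insert a list of (rank, key) pairs into the empty tree. -/
def ZTree.insertList {α : Type*} [LinearOrder α] (ps : List (ℕ × α)) : ZTree α :=
  ps.foldl (fun t p => ZTree.insert p.1 p.2 t) ZTree.empty
set_option linter.unusedSectionVars false
set_option linter.unnecessarySeqFocus false
namespace ZTree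
variable {α : Type*} [LinearOrder α]

theorem neg_one_le_rk (t : ZTree α) : -1 ≤ t.rk := by
  cases t <;> simp [rk] <;> omega

theorem mem_ranks_le_rk : ∀ (t : ZTree α), t.IsZipTree → ∀ n ∈ t.ranks, (n : ℤ) ≤ t.rk
  | .empty, _, n, hn => by simp [ZTree.ranks] at hn
  | .node rank k l r, h, n, hn => by
    obtain ⟨_, _, hlr, hrr, hl, hr⟩ := h
    simp only [ZTree.ranks, Multiset.mem_cons, Multiset.mem_add] at hn
    rcases hn with rfl | hn | hn
    · simp [rk]
    · exact le_trans (mem_ranks_le_rk l hl n hn) (by simpa [rk] using hlr.le)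
    · exact le_trans (mem_ranks_le_rk r hr n hn) (by simpa [rk] using hrr)

theorem rk_le_of_ranks_le {t s : ZTree α} (hs : s.IsZipTree) (h : t.ranks ≤ s.ranks) :
    t.rk ≤ s.rk := by
  cases t with
  | empty => exact neg_one_le_rk s
  | node r k l rt =>
      have : r ∈ s.ranks := Multiset.mem_of_le h (by simp [ZTree.ranks])
      simpa [rk] using mem_ranks_le_rk s hs r this

theorem insert_ne_empty (r : ℕ) (k : α) (t : ZTree α) : ZTree.insert r k t ≠ .empty := by
  cases t with
  | empty => simp [ZTree.insert]
  | node rank key l rt =>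
      simp only [ZTree.insert]
      split_ifs with h1 h2
      · simp
      · split
        · simp
        · split_ifs <;> simp
      · split
        · simp
        · split_ifs <;> simp

end ZTree
set_option maxHeartbeats 1000000
theorem ZTree.keys_insert {α : Type*} [LinearOrder α] (r : ℕ) (k : α) (t : ZTree α) :
    (ZTree.insert r k t).keys = {k} ∪ t.keys := by
  induction t with
  | empty => simp [ZTree.insert, keys]
  | node rank key l rt ihl ihr =>
    simp only [ZTree.insert]
    split_ifs with h1 h2
    · subst h1; simp [keys]
    · cases h : ZTree.insert r k l with
      | empty => exact absurd h (insert_ne_empty r k l)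
      | node tr tk tl trr =>
        rw [h] at ihl
        have hk' : ∀ x, (x = tk ∨ x ∈ tl.keys ∨ x ∈ trr.keys) ↔ (x = k ∨ x ∈ l.keys) := by
          intro x
          have := Set.ext_iff.mp ihl x
          simpa [keys, or_assoc] using this
        dsimp only
        split_ifs with h3 <;>
          · ext x
            have := hk' x
            simp [keys, or_assoc]
            tauto
    · cases h : ZTree.insert r k rt with
      | empty => exact absurd h (insert_ne_empty r k rt)
      | node tr tk tl trr =>
        rw [h] at ihr
        have hk' : ∀ x, (x = tk ∨ x ∈ tl.keys ∨ x ∈ trr.keys) ↔ (x = k ∨ x ∈ rt.keys) := by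
          intro x
          have := Set.ext_iff.mp ihr x
          simpa [keys, or_assoc] using this
        dsimp only
        split_ifs with h3 <;>
          · ext x
            have := hk' x
            simp [keys, or_assoc]
            tauto
theorem ZTree.ranks_insert {α : Type*} [LinearOrder α] (r : ℕ) (k : α) (t : ZTree α)
    (hk : k ∉ t.keys) : (ZTree.insert r k t).ranks = r ::ₘ t.ranks := by
  induction t with
  | empty => simp [ZTree.insert, ZTree.ranks]
  | node rank key l rt ihl ihr =>
    simp only [keys, Set.mem_union, Set.mem_singleton_iff, not_or] at hk
    obtain ⟨⟨hk1, hk2⟩, hk3⟩ := hk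
    simp only [ZTree.insert]
    rw [if_neg hk1]
    split_ifs with h2
    · cases h : ZTree.insert r k l with
      | empty => exact absurd h (insert_ne_empty r k l)
      | node tr tk tl trr =>
        rw [h] at ihl
        have hc := fun a => congrArg (Multiset.count a) (ihl hk2)
        dsimp only
        split_ifs with h3 <;>
          · ext a
            have := hc a
            simp only [ZTree.ranks, Multiset.count_cons, Multiset.count_add] at this ⊢
            split_ifs at this ⊢ <;> omega
    · cases h : ZTree.insert r k rt with
      | empty => exact absurd h (insert_ne_empty r k rt)
      | node tr tk tl trr =>
        rw [h] at ihr
        have hc := fun a => congrArg (Multiset.count a) (ihr hk3)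
        dsimp only
        split_ifs with h3 <;>
          · ext a
            have := hc a
            simp only [ZTree.ranks, Multiset.count_cons, Multiset.count_add] at this ⊢
            split_ifs at this ⊢ <;> omega
theorem ZTree.rk_insert {α : Type*} [LinearOrder α] (r : ℕ) (k : α) (t : ZTree α)
    (hk : k ∉ t.keys) (hz : t.IsZipTree) : (ZTree.insert r k t).rk = max (r : ℤ) t.rk := by
  induction t with
  | empty =>
    simp only [ZTree.insert, rk]
    rw [max_eq_left (by omega : (-1 : ℤ) ≤ (r : ℤ))]
  | node rank key l rt ihl ihr =>
    simp only [keys, Set.mem_union, Set.mem_singleton_iff, not_or] at hk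
    obtain ⟨⟨hk1, hk2⟩, hk3⟩ := hk
    obtain ⟨hbl, hbr, hlrk, hrrk, hl, hr⟩ := hz
    simp only [ZTree.insert]
    rw [if_neg hk1]
    split_ifs with h2
    · cases h : ZTree.insert r k l with
      | empty => exact absurd h (insert_ne_empty r k l)
      | node tr tk tl trr =>
        have hih : (tr : ℤ) = max (r : ℤ) l.rk := by
          have e := ihl hk2 hl; rw [h] at e; exact e
        dsimp only
        split_ifs with h3
        · simp only [rk]
          rw [max_eq_right]
          have := le_max_left (r : ℤ) l.rk
          omega
        · simp only [rk] at h3 ⊢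
          have htr : (tr : ℤ) = r := by
            rcases max_choice (r : ℤ) l.rk with hc | hc <;> rw [hc] at hih <;> omega
          rw [max_eq_left (by omega)]
          omega
    · cases h : ZTree.insert r k rt with
      | empty => exact absurd h (insert_ne_empty r k rt)
      | node tr tk tl trr =>
        have hih : (tr : ℤ) = max (r : ℤ) rt.rk := by
          have e := ihr hk3 hr; rw [h] at e; exact e
        dsimp only
        split_ifs with h3
        · simp only [rk]
          rw [max_eq_right]
          have := le_max_left (r : ℤ) rt.rk
          omega
        · simp only [rk] at h3 ⊢
          have htr : (tr : ℤ) = r := by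
            rcases max_choice (r : ℤ) rt.rk with hc | hc <;> rw [hc] at hih <;> omega
          rw [max_eq_left (by omega)]
          omega
theorem ZTree.insert_isZipTree {α : Type*} [LinearOrder α] (r : ℕ) (k : α) (t : ZTree α)
    (hk : k ∉ t.keys) (hz : t.IsZipTree) : (ZTree.insert r k t).IsZipTree := by
  induction t with
  | empty =>
    simp only [ZTree.insert]
    exact ⟨by simp [keys], by simp [keys], by simp [rk]; omega, by simp [rk],
      trivial, trivial⟩
  | node rank key l rt ihl ihr =>
    simp only [keys, Set.mem_union, Set.mem_singleton_iff, not_or] at hk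
    obtain ⟨⟨hk1, hk2⟩, hk3⟩ := hk
    obtain ⟨hbl, hbr, hlrk, hrrk, hl, hr⟩ := hz
    simp only [ZTree.insert]
    rw [if_neg hk1]
    split_ifs with h2
    · cases h : ZTree.insert r k l with
      | empty => exact absurd h (insert_ne_empty r k l)
      | node tr tk tl trr =>
        have hz'' : ((node tr tk tl trr : ZTree α)).IsZipTree := by
          have := ihl hk2 hl; rwa [h] at this
        obtain ⟨ha, hb, hc, hd, he, hf⟩ := hz''
        have hkeys : ∀ x, (x = tk ∨ x ∈ tl.keys ∨ x ∈ trr.keys) ↔ (x = k ∨ x ∈ l.keys) := by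
          intro x
          have e := keys_insert r k l
          rw [h] at e
          have := Set.ext_iff.mp e x
          simpa [keys, or_assoc] using this
        have hlt : ∀ x, (x = tk ∨ x ∈ tl.keys ∨ x ∈ trr.keys) → x < key := by
          intro x hx
          rcases (hkeys x).mp hx with rfl | hx
          · exact h2
          · exact hbl x hx
        dsimp only
        split_ifs with h3
        · refine ⟨?_, hbr, ?_, hrrk, ⟨ha, hb, hc, hd, he, hf⟩, hr⟩
          · intro x hx
            exact hlt x (by simpa [keys, or_assoc] using hx)
          · simpa [rk] using h3
        · have hih : (tr : ℤ) = max (r : ℤ) l.rk := by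
            have e := rk_insert r k l hk2 hl; rw [h] at e; exact e
          have htr : (tr : ℤ) = r := by
            rcases max_choice (r : ℤ) l.rk with hc' | hc' <;> rw [hc'] at hih <;> omega
          have htrn : tr = r := by exact_mod_cast htr
          have hranks : tl.ranks + trr.ranks = l.ranks := by
            have e := ranks_insert r k l hk2
            rw [h] at e
            simp only [ZTree.ranks, htrn] at e
            exact (Multiset.cons_inj_right _).mp e
          have htrr : trr.rk < (rank : ℤ) := by
            refine lt_of_le_of_lt (rk_le_of_ranks_le hl ?_) hlrk
            rw [← hranks]
            exact Multiset.le_add_left _ _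
          have htk : tk < key := hlt tk (Or.inl rfl)
          refine ⟨ha, ?_, hc, by simp [rk]; omega, he,
            ⟨fun x hx => hlt x (Or.inr (Or.inr hx)), hbr, htrr, hrrk, hf, hr⟩⟩
          intro x hx
          simp only [keys, Set.mem_union, Set.mem_singleton_iff] at hx
          rcases hx with (rfl | hx) | hx
          · exact htk
          · exact hb x hx
          · exact htk.trans (hbr x hx)
    · have hkk : key < k := lt_of_le_of_ne (not_lt.mp h2) fun e => hk1 e.symm
      cases h : ZTree.insert r k rt with
      | empty => exact absurd h (insert_ne_empty r k rt)
      | node tr tk tl trr =>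
        have hz'' : ((node tr tk tl trr : ZTree α)).IsZipTree := by
          have := ihr hk3 hr; rwa [h] at this
        obtain ⟨ha, hb, hc, hd, he, hf⟩ := hz''
        have hkeys : ∀ x, (x = tk ∨ x ∈ tl.keys ∨ x ∈ trr.keys) ↔ (x = k ∨ x ∈ rt.keys) := by
          intro x
          have e := keys_insert r k rt
          rw [h] at e
          have := Set.ext_iff.mp e x
          simpa [keys, or_assoc] using this
        have hgt : ∀ x, (x = tk ∨ x ∈ tl.keys ∨ x ∈ trr.keys) → key < x := by
          intro x hx
          rcases (hkeys x).mp hx with rfl | hx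
          · exact hkk
          · exact hbr x hx
        dsimp only
        split_ifs with h3
        · refine ⟨hbl, ?_, hlrk, ?_, hl, ⟨ha, hb, hc, hd, he, hf⟩⟩
          · intro x hx
            exact hgt x (by simpa [keys, or_assoc] using hx)
          · simpa [rk] using h3
        · have hih : (tr : ℤ) = max (r : ℤ) rt.rk := by
            have e := rk_insert r k rt hk3 hr; rw [h] at e; exact e
          have htr : (tr : ℤ) = r := by
            rcases max_choice (r : ℤ) rt.rk with hc' | hc' <;> rw [hc'] at hih <;> omega
          have htrn : tr = r := by exact_mod_cast htr
          have hranks : tl.ranks + trr.ranks = rt.ranks := by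
            have e := ranks_insert r k rt hk3
            rw [h] at e
            simp only [ZTree.ranks, htrn] at e
            exact (Multiset.cons_inj_right _).mp e
          have htl : tl.rk ≤ (rank : ℤ) := by
            refine le_trans (rk_le_of_ranks_le hr ?_) hrrk
            rw [← hranks]
            exact Multiset.le_add_right _ _
          have htk : key < tk := hgt tk (Or.inl rfl)
          refine ⟨?_, hb, by simp [rk]; omega, hd,
            ⟨hbl, fun x hx => hgt x (Or.inr (Or.inl hx)), hlrk, htl, hl, he⟩, hf⟩
          intro x hx
          simp only [keys, Set.mem_union, Set.mem_singleton_iff] at hx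
          rcases hx with (rfl | hx) | hx
          · exact htk
          · exact (hbl x hx).trans htk
          · exact ha x hx
theorem ZTree.root_eq_sup {α : Type*} [LinearOrder α] (rank : ℕ) (key : α) (l r : ZTree α)
    (hz : (ZTree.node rank key l r).IsZipTree) :
    rank = (ZTree.node rank key l r).ranks.sup := by
  refine le_antisymm (Multiset.le_sup (by simp [ZTree.ranks])) (Multiset.sup_le.mpr ?_)
  intro n hn
  have := mem_ranks_le_rk _ hz n hn
  simp only [rk] at this
  exact_mod_cast this

theorem ZTree.insertList_spec {α : Type*} [LinearOrder α] (ps : List (ℕ × α)) :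
    ∀ t : ZTree α, t.IsZipTree → (∀ p ∈ ps, p.2 ∉ t.keys) → (ps.map Prod.snd).Nodup →
      (ps.foldl (fun t p => ZTree.insert p.1 p.2 t) t).IsZipTree ∧
      (ps.foldl (fun t p => ZTree.insert p.1 p.2 t) t).ranks = t.ranks + ↑(ps.map Prod.fst) := by
  induction ps with
  | nil => intro t hz _ _; simpa using hz
  | cons p ps ih =>
    intro t hz hmem hnd
    have hpk : p.2 ∉ t.keys := hmem p List.mem_cons_self
    have h1 := ZTree.insert_isZipTree p.1 p.2 t hpk hz
    have h2 := ZTree.keys_insert p.1 p.2 t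
    have h3 := ZTree.ranks_insert p.1 p.2 t hpk
    simp only [List.map_cons, List.nodup_cons] at hnd
    obtain ⟨hnd1, hnd2⟩ := hnd
    have hmem' : ∀ q ∈ ps, q.2 ∉ (ZTree.insert p.1 p.2 t).keys := by
      intro q hq
      rw [h2]
      simp only [Set.mem_union, Set.mem_singleton_iff, not_or]
      refine ⟨fun e => hnd1 ?_, hmem q (List.mem_cons_of_mem p hq)⟩
      rw [← e]
      exact List.mem_map_of_mem (f := Prod.snd) hq
    obtain ⟨g1, g3⟩ := ih (ZTree.insert p.1 p.2 t) h1 hmem' hnd2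
    refine ⟨by simpa using g1, ?_⟩
    simp only [List.foldl_cons]
    rw [g3, h3]
    ext a
    simp only [Multiset.count_add, Multiset.count_cons, List.map_cons, Multiset.coe_count]
    split_ifs <;> simp_all [List.count_cons] <;> omega

theorem root_rank_eq_max {α : Type*} [LinearOrder α] :
    (∀ (rank : ℕ) (key : α) (l r : ZTree α),
        (ZTree.node rank key l r).IsZipTree →
        rank = (ZTree.node rank key l r).ranks.sup) ∧
    (∀ ps : List (ℕ × α), ps ≠ [] → (ps.map Prod.snd).Nodup →
        (ZTree.insertList ps).rk = (((ps.map Prod.fst).foldr max 0 : ℕ) : ℤ)) := by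
  constructor
  · exact ZTree.root_eq_sup
  · intro ps hps hnd
    obtain ⟨g1, g3⟩ := ZTree.insertList_spec ps ZTree.empty trivial
      (by simp [ZTree.keys]) hnd
    have hranks : (ZTree.insertList ps).ranks = ↑(ps.map Prod.fst) := by
      simpa [ZTree.insertList, ZTree.ranks] using g3
    have g1' : (ZTree.insertList ps).IsZipTree := g1
    cases htree : ZTree.insertList ps with
    | empty =>
      exfalso
      rw [htree] at hranks
      simp only [ZTree.ranks] at hranks
      have : ps.map Prod.fst = [] := by
        simpa using hranks.symm
      simp at this
      exact hps this
    | node rank key l r =>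
      rw [htree] at hranks g1'
      have hsup := ZTree.root_eq_sup rank key l r g1'
      rw [hranks] at hsup
      have : (ZTree.node rank key l r : ZTree α).rk = (rank : ℤ) := rfl
      rw [this, hsup]
      rw [Multiset.sup_coe]
      rfl
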